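/- Let N = (S, C, R) be a deficiency-one chemical reaction network which, equipped with a PL-RDK kinetics with T-matrix T, admits a positive equilibrium. Suppose the network has zero reactant deficiency (so the reactant matrix Y_res is injective on the reactant subspace), has two nonterminal complexes y, y' ∈ C differing only in species X_j, and the map ŷ := T ∘ Y_res^{-1} : R → Im T is given by ŷ(X_1, ..., X_j, ..., X_m) = (a_1 X_1, ..., a_j X_j, ..., a_m X_m) with all a_i ≠ 0. Then the system is PL-RLK (the columns of T are linearly independent) and has absolute concentration robustness in X_j. -/

import Mathlib

open scoped BigOperators Classical

/-- A chemical reaction network (CRN) on a finite species set `S`: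
complexes are non-negative vectors in `ℝ^S`, reactions are pairs of complexes,
no reaction is a self-loop, and every complex occurs in some reaction. -/
structure CRN (S : Type*) [Fintype S] where
  complexes : Finset (S → ℝ)
  reactions : Finset ((S → ℝ) × (S → ℝ))
  complexes_nonneg : ∀ y ∈ complexes, ∀ i, 0 ≤ y i
  mem_source : ∀ r ∈ reactions, r.1 ∈ complexes
  mem_target : ∀ r ∈ reactions, r.2 ∈ complexes
  ne_of_mem : ∀ r ∈ reactions, r.1 ≠ r.2
  cover : ∀ y ∈ complexes, ∃ y', (y, y') ∈ reactions ∨ (y', y) ∈ reactions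

namespace CRN

variable {S : Type*} [Fintype S] (N : CRN S)

/-- One-step reaction relation on complexes. -/
def step (y y' : S → ℝ) : Prop := (y, y') ∈ N.reactions

/-- Reachability along directed reactions. -/
def reach : (S → ℝ) → (S → ℝ) → Prop := Relation.ReflTransGen N.step

/-- A complex is terminal iff it belongs to a terminal strong linkage class,
i.e. everything reachable from it can reach it back. -/
def IsTerminal (y : S → ℝ) : Prop :=
  y ∈ N.complexes ∧ ∀ y', N.reach y y' → N.reach y' y

/-- A nonterminal complex. -/
def Nonterminal (y : S → ℝ) : Prop := y ∈ N.complexes ∧ ¬ N.IsTerminal y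

/-- The set of terminal strong linkage classes. -/
def tslc : Set (Set (S → ℝ)) :=
  {L | ∃ y, N.IsTerminal y ∧ L = {y' | N.reach y y' ∧ N.reach y' y}}

/-- The number `t` of terminal strong linkage classes. -/
noncomputable def numTSLC : ℕ := Nat.card N.tslc

/-- Undirected connectivity (for linkage classes). -/
def linked : (S → ℝ) → (S → ℝ) → Prop :=
  Relation.ReflTransGen (fun a b => (a, b) ∈ N.reactions ∨ (b, a) ∈ N.reactions)

/-- The set of linkage classes (connected components of the reaction digraph). -/
def linkageClasses : Set (Set (S → ℝ)) :=
  {L | ∃ y ∈ N.complexes, L = {y' | y' ∈ N.complexes ∧ N.linked y y'}}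

/-- The number `ℓ` of linkage classes. -/
noncomputable def numLinkageClasses : ℕ := Nat.card N.linkageClasses

/-- The stoichiometric subspace `S = span{y' - y : y → y'}`. -/
def stoichSubspace : Submodule ℝ (S → ℝ) :=
  Submodule.span ℝ {v | ∃ r ∈ N.reactions, v = r.2 - r.1}

/-- The rank `s` of the network. -/
noncomputable def rank : ℕ := Module.finrank ℝ N.stoichSubspace

/-- The deficiency `δ = n - ℓ - s`. -/
noncomputable def deficiency : ℤ :=
  (N.complexes.card : ℤ) - N.numLinkageClasses - N.rank

/-- The map of complexes `Y : ℝ^C → ℝ^S`, sending `ω_y ↦ y`. -/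
noncomputable def mapY : (↥N.complexes → ℝ) →ₗ[ℝ] (S → ℝ) :=
  ∑ y : ↥N.complexes, (LinearMap.proj y).smulRight (y : S → ℝ)

/-- The incidence map `I_a : ℝ^R → ℝ^C`, sending `ω_{y→y'} ↦ ω_{y'} - ω_y`. -/
noncomputable def incidence : (↥N.reactions → ℝ) →ₗ[ℝ] (↥N.complexes → ℝ) :=
  ∑ r : ↥N.reactions,
    (LinearMap.proj r).smulRight
      (Pi.single (⟨r.1.2, N.mem_target r.1 r.2⟩ : ↥N.complexes) 1
        - Pi.single (⟨r.1.1, N.mem_source r.1 r.2⟩ : ↥N.complexes) 1)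

/-- The Laplacian map `A_k x = Σ_{y→y'} k_{y→y'} x_y (ω_{y'} - ω_y)`. -/
noncomputable def laplacian (k : ↥N.reactions → ℝ) :
    (↥N.complexes → ℝ) →ₗ[ℝ] (↥N.complexes → ℝ) :=
  ∑ r : ↥N.reactions, k r •
    ((LinearMap.proj (⟨r.1.1, N.mem_source r.1 r.2⟩ : ↥N.complexes)).smulRight
      (Pi.single (⟨r.1.2, N.mem_target r.1 r.2⟩ : ↥N.complexes) 1
        - Pi.single (⟨r.1.1, N.mem_source r.1 r.2⟩ : ↥N.complexes) 1))

/-- A positive equilibrium of the PL-RDK system with rate constants `k` and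
kinetic-order assignment (T-matrix) `T`. -/
def IsPosEquilibrium (k : ↥N.reactions → ℝ) (T : (S → ℝ) → (S → ℝ)) (c : S → ℝ) : Prop :=
  (∀ i, 0 < c i) ∧
    ∑ r : ↥N.reactions, (k r * ∏ i, (c i) ^ (T r.1.1 i)) • ((r.1.2 : S → ℝ) - r.1.1) = 0

/-- The set of reactant complexes. -/
def reactantSet : Set (S → ℝ) := {y | ∃ y', (y, y') ∈ N.reactions}

/-- The reactant subspace `R = Im Y_res`. -/
def reactantSubspace : Submodule ℝ (S → ℝ) := Submodule.span ℝ N.reactantSet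

/-- The reactant deficiency `δ_ρ = n_r - q`. -/
noncomputable def reactantDeficiency : ℤ :=
  (Nat.card N.reactantSet : ℤ) - Module.finrank ℝ N.reactantSubspace

end CRN

section Aux

open CRN Finset

variable {S : Type*} [Fintype S] (N : CRN S)

/-- Source of a reaction, as an element of the complexes. -/
def CRN.src (r : ↥N.reactions) : ↥N.complexes := ⟨r.1.1, N.mem_source r.1 r.2⟩

/-- Target of a reaction, as an element of the complexes. -/
def CRN.tgt (r : ↥N.reactions) : ↥N.complexes := ⟨r.1.2, N.mem_target r.1 r.2⟩

lemma CRN.mapY_apply (v : ↥N.complexes → ℝ) :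
    N.mapY v = ∑ y : ↥N.complexes, v y • (y : S → ℝ) := by
  simp [CRN.mapY, LinearMap.sum_apply]

lemma CRN.mapY_single (z : ↥N.complexes) :
    N.mapY (Pi.single z (1 : ℝ)) = (z : S → ℝ) := by
  classical
  rw [CRN.mapY_apply, Finset.sum_eq_single z]
  · simp
  · intro y _ hy
    rw [Pi.single_eq_of_ne hy, zero_smul]
  · simp

lemma CRN.incidence_apply (w : ↥N.reactions → ℝ) :
    N.incidence w = ∑ r : ↥N.reactions,
      w r • (Pi.single (N.tgt r) (1:ℝ) - Pi.single (N.src r) 1) := by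
  simp [CRN.incidence, LinearMap.sum_apply, CRN.src, CRN.tgt]

lemma CRN.lap_apply (k : ↥N.reactions → ℝ) (x : ↥N.complexes → ℝ) :
    N.laplacian k x = ∑ r : ↥N.reactions,
      (k r * x (N.src r)) • (Pi.single (N.tgt r) (1:ℝ) - Pi.single (N.src r) 1) := by
  simp [CRN.laplacian, LinearMap.sum_apply, CRN.src, CRN.tgt, smul_smul]

lemma CRN.lap_mem_range (k : ↥N.reactions → ℝ) (x : ↥N.complexes → ℝ) :
    N.laplacian k x ∈ LinearMap.range N.incidence := by
  refine ⟨fun r => k r * x (N.src r), ?_⟩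
  rw [CRN.incidence_apply, CRN.lap_apply]

lemma CRN.mapY_lap (k : ↥N.reactions → ℝ) (x : ↥N.complexes → ℝ) :
    N.mapY (N.laplacian k x) = ∑ r : ↥N.reactions,
      (k r * x (N.src r)) • ((N.tgt r : S → ℝ) - (N.src r : S → ℝ)) := by
  rw [CRN.lap_apply, map_sum]
  refine Finset.sum_congr rfl fun r _ => ?_
  rw [map_smul, map_sub, CRN.mapY_single, CRN.mapY_single]

/-- pairing a test function against an element of the kernel of the Laplacian -/
lemma CRN.dot_lap (k : ↥N.reactions → ℝ) (x : ↥N.complexes → ℝ)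
    (hx : N.laplacian k x = 0) (χ : ↥N.complexes → ℝ) :
    ∑ r : ↥N.reactions, (k r * x (N.src r)) * (χ (N.tgt r) - χ (N.src r)) = 0 := by
  classical
  have h0 : ∑ z : ↥N.complexes, χ z * (N.laplacian k x) z = 0 := by
    rw [hx]; simp
  rw [CRN.lap_apply] at h0
  simp only [Finset.sum_apply, Pi.smul_apply, Pi.sub_apply, smul_eq_mul,
    Finset.mul_sum] at h0
  rw [Finset.sum_comm] at h0
  rw [← h0]
  refine Finset.sum_congr rfl fun r _ => ?_
  have h1 : ∀ t : ↥N.complexes,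
      ∑ z : ↥N.complexes, χ z * ((k r * x (N.src r)) * (Pi.single t (1:ℝ) : ↥N.complexes → ℝ) z)
        = (k r * x (N.src r)) * χ t := by
    intro t
    rw [Finset.sum_eq_single t]
    · simp [mul_comm]
    · intro z _ hz
      rw [Pi.single_eq_of_ne hz]; ring
    · simp
  calc (k r * x (N.src r)) * (χ (N.tgt r) - χ (N.src r))
      = (k r * x (N.src r)) * χ (N.tgt r) - (k r * x (N.src r)) * χ (N.src r) := by ring
    _ = ∑ z : ↥N.complexes, (χ z * ((k r * x (N.src r)) * (Pi.single (N.tgt r) (1:ℝ) : ↥N.complexes → ℝ) z)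
          - χ z * ((k r * x (N.src r)) * (Pi.single (N.src r) (1:ℝ) : ↥N.complexes → ℝ) z)) := by
        rw [Finset.sum_sub_distrib, h1, h1]
    _ = ∑ z : ↥N.complexes, χ z * ((k r * x (N.src r)) * ((Pi.single (N.tgt r) (1:ℝ) : ↥N.complexes → ℝ) z - (Pi.single (N.src r) (1:ℝ) : ↥N.complexes → ℝ) z)) := by
        refine Finset.sum_congr rfl fun z _ => by ring

lemma CRN.step_of_subtype (r : ↥N.reactions) :
    N.step (N.src r : S → ℝ) (N.tgt r : S → ℝ) := by
  show ((r.1.1, r.1.2)) ∈ N.reactions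
  simpa using r.2

/-- A kernel element of the Laplacian is positive nowhere nonterminal (contradiction form). -/
lemma CRN.ker_lap_pos_false (k : ↥N.reactions → ℝ) (hk : ∀ r, 0 < k r)
    (x : ↥N.complexes → ℝ) (hx : N.laplacian k x = 0)
    (y : S → ℝ) (hy : N.Nonterminal y) (hyc : y ∈ N.complexes)
    (hpos : 0 < x ⟨y, hyc⟩) : False := by
  classical
  -- Step 1
  set χ₁ : ↥N.complexes → ℝ := fun z => if 0 < x z then 1 else 0 with hχ₁
  have h1 := N.dot_lap k x hx χ₁
  have hterm1 : ∀ r ∈ Finset.univ (α := ↥N.reactions),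
      (k r * x (N.src r)) * (χ₁ (N.tgt r) - χ₁ (N.src r)) ≤ 0 := by
    intro r _
    by_cases hs : 0 < x (N.src r) <;> by_cases ht : 0 < x (N.tgt r) <;>
      simp only [hχ₁, if_pos, if_neg, hs, ht, if_true, if_false]
    · simp
    · have := hk r; nlinarith
    · have := hk r; have hs' : x (N.src r) ≤ 0 := le_of_not_gt hs; nlinarith
    · simp
  have hz1 : ∀ r ∈ Finset.univ (α := ↥N.reactions),
      (k r * x (N.src r)) * (χ₁ (N.tgt r) - χ₁ (N.src r)) = 0 :=
    (Finset.sum_eq_zero_iff_of_nonpos hterm1).1 h1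
  have F1 : ∀ r : ↥N.reactions, 0 < x (N.src r) → 0 < x (N.tgt r) := by
    intro r hs
    by_contra ht
    have := hz1 r (Finset.mem_univ r)
    simp only [hχ₁, if_pos hs, if_neg ht] at this
    have := hk r; nlinarith
  have F2 : ∀ r : ↥N.reactions, 0 < x (N.tgt r) → 0 ≤ x (N.src r) := by
    intro r ht
    by_contra hs
    push_neg at hs
    have hs' : ¬ 0 < x (N.src r) := by linarith
    have := hz1 r (Finset.mem_univ r)
    simp only [hχ₁, if_pos ht, if_neg hs'] at this
    have := hk r; nlinarith
  -- Step 2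
  set χ₂ : ↥N.complexes → ℝ :=
    fun z => if 0 < x z ∧ ¬ N.reach (z : S → ℝ) y then 1 else 0 with hχ₂
  have h2 := N.dot_lap k x hx χ₂
  have hterm2 : ∀ r ∈ Finset.univ (α := ↥N.reactions),
      0 ≤ (k r * x (N.src r)) * (χ₂ (N.tgt r) - χ₂ (N.src r)) := by
    intro r _
    by_cases hs : 0 < x (N.src r) ∧ ¬ N.reach (N.src r : S → ℝ) y
    · have ht : 0 < x (N.tgt r) ∧ ¬ N.reach (N.tgt r : S → ℝ) y := by
        refine ⟨F1 r hs.1, fun hr => hs.2 ?_⟩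
        exact Relation.ReflTransGen.head (N.step_of_subtype r) hr
      simp [hχ₂, if_pos hs, if_pos ht]
    · by_cases ht : 0 < x (N.tgt r) ∧ ¬ N.reach (N.tgt r : S → ℝ) y
      · have hxs : 0 ≤ x (N.src r) := F2 r ht.1
        simp only [hχ₂, if_pos ht, if_neg hs]
        have := (hk r).le
        nlinarith
      · simp [hχ₂, if_neg hs, if_neg ht]
  have hz2 : ∀ r ∈ Finset.univ (α := ↥N.reactions),
      (k r * x (N.src r)) * (χ₂ (N.tgt r) - χ₂ (N.src r)) = 0 :=
    (Finset.sum_eq_zero_iff_of_nonneg hterm2).1 h2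
  have F3 : ∀ r : ↥N.reactions, 0 < x (N.src r) → N.reach (N.src r : S → ℝ) y →
      ¬ N.reach (N.tgt r : S → ℝ) y → False := by
    intro r hs hrs hrt
    have ht2 : 0 < x (N.tgt r) ∧ ¬ N.reach (N.tgt r : S → ℝ) y := ⟨F1 r hs, hrt⟩
    have hs2 : ¬ (0 < x (N.src r) ∧ ¬ N.reach (N.src r : S → ℝ) y) := by
      intro h; exact h.2 hrs
    have := hz2 r (Finset.mem_univ r)
    simp only [hχ₂, if_pos ht2, if_neg hs2] at this
    have := hk r; nlinarith
  -- Step 3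
  obtain ⟨hyc', hnt⟩ := hy
  rw [CRN.IsTerminal] at hnt
  push_neg at hnt
  obtain ⟨w, hw1, hw2⟩ := hnt hyc'
  have pos_along : ∀ v : S → ℝ, N.reach y v → ∃ hv : v ∈ N.complexes, 0 < x ⟨v, hv⟩ := by
    intro v huv
    have huv' : Relation.ReflTransGen N.step y v := huv
    induction huv' with
    | refl => exact ⟨hyc, hpos⟩
    | @tail b c hb hstep ih =>
        obtain ⟨hbm, hxb⟩ := ih hb
        have hr : (b, c) ∈ N.reactions := hstep
        refine ⟨N.mem_target (b, c) hr, ?_⟩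
        exact F1 ⟨(b, c), hr⟩ hxb
  have cross : ∀ v : S → ℝ, N.reach y v → ¬ N.reach v y → False := by
    intro v hv
    have hv' : Relation.ReflTransGen N.step y v := hv
    induction hv' with
    | refl => exact fun h => h Relation.ReflTransGen.refl
    | @tail b c hb hstep ih =>
        intro hnr
        by_cases hby : N.reach b y
        · obtain ⟨hbm, hxb⟩ := pos_along b hb
          have hr : (b, c) ∈ N.reactions := hstep
          exact F3 ⟨(b, c), hr⟩ hxb hby hnr
        · exact ih hb hby
  exact cross w hw1 hw2

lemma CRN.ker_lap_nonterminal (k : ↥N.reactions → ℝ) (hk : ∀ r, 0 < k r)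
    (x : ↥N.complexes → ℝ) (hx : N.laplacian k x = 0)
    (y : S → ℝ) (hy : N.Nonterminal y) : x ⟨y, hy.1⟩ = 0 := by
  by_contra h
  rcases lt_or_gt_of_ne h with hneg | hpos
  · refine N.ker_lap_pos_false k hk (-x) ?_ y hy hy.1 ?_
    · rw [map_neg, hx, neg_zero]
    · simpa using hneg
  · exact N.ker_lap_pos_false k hk x hx y hy hy.1 hpos

lemma CRN.nonterminal_reactant {y : S → ℝ} (hy : N.Nonterminal y) : y ∈ N.reactantSet := by
  obtain ⟨hyc, hnt⟩ := hy
  rw [CRN.IsTerminal] at hnt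
  push_neg at hnt
  obtain ⟨w, hw1, hw2⟩ := hnt hyc
  rcases (Relation.ReflTransGen.cases_head hw1) with rfl | ⟨c, hc, _⟩
  · exact absurd Relation.ReflTransGen.refl hw2
  · exact ⟨c, hc⟩

end Aux

section Aux2

open CRN Finset

variable {S : Type*} [Fintype S] (N : CRN S)

lemma CRN.linked_symm : Symmetric N.linked :=
  fun a b h => by
    unfold CRN.linked at h ⊢
    induction h with
    | refl => exact Relation.ReflTransGen.refl
    | tail _ hbc ih => exact Relation.ReflTransGen.head (Or.symm hbc) ih

lemma CRN.linkage_subset {L : Set (S → ℝ)} (hL : L ∈ N.linkageClasses) :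
    L ⊆ (↑N.complexes : Set (S → ℝ)) := by
  obtain ⟨y0, h0, rfl⟩ := hL
  rintro z ⟨hz, _⟩
  exact hz

lemma CRN.linkage_finite : N.linkageClasses.Finite :=
  (N.complexes.finite_toSet.finite_subsets).subset fun L hL => N.linkage_subset hL

lemma CRN.mem_class_iff_of_step {L : Set (S → ℝ)} (hL : L ∈ N.linkageClasses)
    {u v : S → ℝ} (huv : (u, v) ∈ N.reactions) : u ∈ L ↔ v ∈ L := by
  obtain ⟨y0, hy0, rfl⟩ := hL
  constructor
  · rintro ⟨hu, hlink⟩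
    exact ⟨N.mem_target _ huv, hlink.tail (Or.inl huv)⟩
  · rintro ⟨hv, hlink⟩
    exact ⟨N.mem_source _ huv, hlink.tail (Or.inr huv)⟩

lemma CRN.class_eq_of_mem {L L' : Set (S → ℝ)} (hL : L ∈ N.linkageClasses)
    (hL' : L' ∈ N.linkageClasses) {z : S → ℝ} (hz : z ∈ L) (hz' : z ∈ L') : L = L' := by
  obtain ⟨y0, hy0, rfl⟩ := hL
  obtain ⟨y1, hy1, rfl⟩ := hL'
  obtain ⟨hzc, hlink0⟩ := hz
  obtain ⟨-, hlink1⟩ := hz'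
  ext u
  constructor
  · rintro ⟨hu, h0⟩
    exact ⟨hu, hlink1.trans ((N.linked_symm hlink0).trans h0)⟩
  · rintro ⟨hu, h1⟩
    exact ⟨hu, hlink0.trans ((N.linked_symm hlink1).trans h1)⟩

/-- The per-linkage-class summation map. -/
noncomputable def CRN.lcSum : (↥N.complexes → ℝ) →ₗ[ℝ] (↥N.linkageClasses → ℝ) where
  toFun x L := ∑ z : ↥N.complexes,
    (if (z : S → ℝ) ∈ (L : Set (S → ℝ)) then x z else 0)
  map_add' x y := by
    funext L
    rw [Pi.add_apply, ← Finset.sum_add_distrib]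
    refine Finset.sum_congr rfl fun z _ => ?_
    by_cases h : (z : S → ℝ) ∈ (L : Set (S → ℝ)) <;> simp [h]
  map_smul' c x := by
    funext L
    simp only [RingHom.id_apply, Pi.smul_apply, smul_eq_mul, Finset.mul_sum]
    refine Finset.sum_congr rfl fun z _ => ?_
    by_cases h : (z : S → ℝ) ∈ (L : Set (S → ℝ)) <;> simp [h]

lemma CRN.lcSum_apply (x : ↥N.complexes → ℝ) (L : ↥N.linkageClasses) :
    N.lcSum x L = ∑ z : ↥N.complexes,
      (if (z : S → ℝ) ∈ (L : Set (S → ℝ)) then (1:ℝ) else 0) * x z := by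
  show (∑ z : ↥N.complexes, if (z : S → ℝ) ∈ (L : Set (S → ℝ)) then x z else 0) = _
  refine Finset.sum_congr rfl fun z _ => ?_
  by_cases h : (z : S → ℝ) ∈ (L : Set (S → ℝ)) <;> simp [h]

lemma CRN.range_incidence_le_ker_lcSum :
    LinearMap.range N.incidence ≤ LinearMap.ker N.lcSum := by
  rintro _ ⟨w, rfl⟩
  rw [LinearMap.mem_ker]
  funext L
  rw [Pi.zero_apply, CRN.lcSum_apply, CRN.incidence_apply]
  simp only [Finset.sum_apply, Pi.smul_apply, Pi.sub_apply, smul_eq_mul, Finset.mul_sum]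
  rw [Finset.sum_comm]
  refine Finset.sum_eq_zero fun r _ => ?_
  have hsingle : ∀ t : ↥N.complexes,
      ∑ z : ↥N.complexes, (if (z : S → ℝ) ∈ (L : Set (S → ℝ)) then (1:ℝ) else 0) *
        (w r * (Pi.single t (1:ℝ) : ↥N.complexes → ℝ) z)
      = (if (t : S → ℝ) ∈ (L : Set (S → ℝ)) then (1:ℝ) else 0) * w r := by
    intro t
    rw [Finset.sum_eq_single t]
    · simp [mul_comm]
    · intro z _ hz
      rw [Pi.single_eq_of_ne hz]; ring
    · simp
  have hmem : ((N.src r : S → ℝ) ∈ (L : Set (S → ℝ))) ↔ ((N.tgt r : S → ℝ) ∈ (L : Set (S → ℝ))) :=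
    N.mem_class_iff_of_step L.2 (N.step_of_subtype r)
  calc ∑ z : ↥N.complexes, (if (z : S → ℝ) ∈ (L : Set (S → ℝ)) then (1:ℝ) else 0) *
        (w r * ((Pi.single (N.tgt r) (1:ℝ) : ↥N.complexes → ℝ) z - (Pi.single (N.src r) (1:ℝ) : ↥N.complexes → ℝ) z))
      = ∑ z : ↥N.complexes, ((if (z : S → ℝ) ∈ (L : Set (S → ℝ)) then (1:ℝ) else 0) *
          (w r * (Pi.single (N.tgt r) (1:ℝ) : ↥N.complexes → ℝ) z)
        - (if (z : S → ℝ) ∈ (L : Set (S → ℝ)) then (1:ℝ) else 0) *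
          (w r * (Pi.single (N.src r) (1:ℝ) : ↥N.complexes → ℝ) z)) := by
        refine Finset.sum_congr rfl fun z _ => by ring
    _ = (if (N.tgt r : S → ℝ) ∈ (L : Set (S → ℝ)) then (1:ℝ) else 0) * w r
        - (if (N.src r : S → ℝ) ∈ (L : Set (S → ℝ)) then (1:ℝ) else 0) * w r := by
        rw [Finset.sum_sub_distrib, hsingle, hsingle]
    _ = 0 := by
        by_cases h : (N.src r : S → ℝ) ∈ (L : Set (S → ℝ))
        · rw [if_pos (hmem.1 h), if_pos h, sub_self]
        · rw [if_neg (fun ht => h (hmem.2 ht)), if_neg h, sub_self]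

/-- A representative of each linkage class. -/
noncomputable def CRN.lcRep (L : ↥N.linkageClasses) : ↥N.complexes :=
  ⟨L.2.choose, L.2.choose_spec.1⟩

lemma CRN.lcRep_mem (L : ↥N.linkageClasses) :
    (N.lcRep L : S → ℝ) ∈ (L : Set (S → ℝ)) := by
  have h := L.2.choose_spec.2
  rw [h]
  exact ⟨L.2.choose_spec.1, Relation.ReflTransGen.refl⟩

lemma CRN.lcSum_surjective : Function.Surjective N.lcSum := by
  classical
  haveI : Fintype ↥N.linkageClasses := N.linkage_finite.fintype
  intro g
  refine ⟨∑ L : ↥N.linkageClasses, g L • (Pi.single (N.lcRep L) (1:ℝ) : ↥N.complexes → ℝ), ?_⟩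
  rw [map_sum]
  funext L'
  rw [Finset.sum_apply]
  rw [Finset.sum_eq_single L']
  · rw [map_smul, Pi.smul_apply, smul_eq_mul, CRN.lcSum_apply, Finset.sum_eq_single (N.lcRep L')]
    · rw [if_pos (N.lcRep_mem L'), Pi.single_eq_same, mul_one, mul_one]
    · intro z _ hz
      rw [Pi.single_eq_of_ne hz, mul_zero]
    · simp
  · intro L _ hL
    rw [map_smul, Pi.smul_apply, smul_eq_mul, CRN.lcSum_apply, Finset.sum_eq_single (N.lcRep L)]
    · rw [if_neg, zero_mul, mul_zero]
      intro hmem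
      exact hL (Subtype.ext (N.class_eq_of_mem L.2 L'.2 (N.lcRep_mem L) hmem))
    · intro z _ hz
      rw [Pi.single_eq_of_ne hz, mul_zero]
    · simp
  · simp

lemma CRN.finrank_ker_lcSum :
    Module.finrank ℝ (LinearMap.ker N.lcSum) + N.numLinkageClasses = N.complexes.card := by
  classical
  haveI : Fintype ↥N.linkageClasses := N.linkage_finite.fintype
  have h := LinearMap.finrank_range_add_finrank_ker N.lcSum
  rw [LinearMap.range_eq_top.2 N.lcSum_surjective] at h
  rw [finrank_top] at h
  rw [Module.finrank_fintype_fun_eq_card, Module.finrank_fintype_fun_eq_card] at h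
  have hcard : Fintype.card ↥N.linkageClasses = N.numLinkageClasses := by
    rw [CRN.numLinkageClasses, Nat.card_eq_fintype_card]
  have hcard2 : Fintype.card ↥N.complexes = N.complexes.card := Fintype.card_coe _
  omega

lemma CRN.map_range_incidence :
    (LinearMap.range N.incidence).map N.mapY = N.stoichSubspace := by
  classical
  apply le_antisymm
  · rintro v ⟨u, ⟨w, rfl⟩, rfl⟩
    rw [CRN.incidence_apply, map_sum]
    refine Submodule.sum_mem _ fun r _ => ?_
    rw [map_smul, map_sub, CRN.mapY_single, CRN.mapY_single]
    exact Submodule.smul_mem _ _ (Submodule.subset_span ⟨r.1, r.2, rfl⟩)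
  · rw [CRN.stoichSubspace]
    refine Submodule.span_le.2 ?_
    rintro v ⟨rp, hrp, rfl⟩
    refine ⟨Pi.single (N.tgt ⟨rp, hrp⟩) 1 - Pi.single (N.src ⟨rp, hrp⟩) 1,
      ⟨Pi.single (⟨rp, hrp⟩ : ↥N.reactions) 1, ?_⟩, ?_⟩
    · rw [CRN.incidence_apply, Finset.sum_eq_single (⟨rp, hrp⟩ : ↥N.reactions)]
      · rw [Pi.single_eq_same, one_smul]
      · intro r _ hr
        rw [Pi.single_eq_of_ne hr, zero_smul]
      · simp
    · rw [map_sub, CRN.mapY_single, CRN.mapY_single]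
      rfl

set_option maxHeartbeats 1000000 in
set_option synthInstance.maxHeartbeats 400000 in
lemma CRN.finrank_K_le_deficiency :
    (Module.finrank ℝ ↥(LinearMap.ker N.mapY ⊓ LinearMap.range N.incidence) : ℤ)
      ≤ N.deficiency := by
  classical
  set W := LinearMap.range N.incidence with hW
  set K := LinearMap.ker N.mapY ⊓ W with hK
  have hrn := LinearMap.finrank_range_add_finrank_ker (N.mapY.domRestrict W)
  rw [LinearMap.range_domRestrict, LinearMap.ker_domRestrict] at hrn
  have hker_eq : (LinearMap.ker N.mapY).comap W.subtype = K.comap W.subtype := by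
    ext x
    simp only [Submodule.mem_comap, hK, Submodule.mem_inf]
    exact ⟨fun h => ⟨h, x.2⟩, fun h => h.1⟩
  rw [hker_eq] at hrn
  have hKW : K ≤ W := inf_le_right
  have heq : Module.finrank ℝ (K.comap W.subtype) = Module.finrank ℝ K :=
    (Submodule.comapSubtypeEquivOfLe hKW).finrank_eq
  rw [heq] at hrn
  rw [CRN.map_range_incidence] at hrn
  -- hrn : finrank stoich + finrank K = finrank W
  have hWle : Module.finrank ℝ W ≤ Module.finrank ℝ (LinearMap.ker N.lcSum) :=
    Submodule.finrank_mono N.range_incidence_le_ker_lcSum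
  have hdim := N.finrank_ker_lcSum
  rw [CRN.deficiency, CRN.rank]
  push_cast
  omega

end Aux2

/-- Let `N` be a deficiency-one CRN which, with PL-RDK kinetics (rate constants
`k`, T-matrix `T`), admits a positive equilibrium.  Suppose the network has zero
reactant deficiency, two nonterminal complexes `y, y'` differing only in species
`j`, and the map `ŷ = T ∘ Y_res⁻¹` is diagonal with nonzero entries `a_i` (i.e.
`T z = (a_1 z_1, …, a_m z_m)` for every reactant complex `z`).  Then the system
is PL-RLK (the columns of `T` are linearly independent) and has absolute
concentration robustness in species `j`. -/
theorem PLRLK_and_ACR {S : Type*} [Fintype S] (N : CRN S)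
    (hδ : N.deficiency = 1)
    (k : ↥N.reactions → ℝ) (hk : ∀ r, 0 < k r)
    (T : (S → ℝ) → (S → ℝ))
    (hex : ∃ c, N.IsPosEquilibrium k T c)
    (hρ : N.reactantDeficiency = 0)
    (j : S) (y y' : S → ℝ) (hy : N.Nonterminal y) (hy' : N.Nonterminal y')
    (hne : y ≠ y') (hdiff : ∀ i, i ≠ j → y i = y' i)
    (a : S → ℝ) (ha : ∀ i, a i ≠ 0)
    (hT : ∀ z ∈ N.reactantSet, ∀ i, T z i = a i * z i) :
    LinearIndependent ℝ (fun z : ↥N.reactantSet => T (z : S → ℝ)) ∧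
    (∀ c c' : S → ℝ, N.IsPosEquilibrium k T c → N.IsPosEquilibrium k T c' →
      c j = c' j) := by
  classical
  have hfin : N.reactantSet.Finite :=
    Set.Finite.subset N.complexes.finite_toSet (fun z hz => by
      obtain ⟨w, hw⟩ := hz; exact N.mem_source _ hw)
  haveI : Fintype ↥N.reactantSet := hfin.fintype
  constructor
  · -- PL-RLK
    have hcard : Fintype.card ↥N.reactantSet
        = Module.finrank ℝ ↥N.reactantSubspace := by
      have h := hρ
      rw [CRN.reactantDeficiency] at h
      have h2 : Nat.card ↥N.reactantSet = Fintype.card ↥N.reactantSet :=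
        Nat.card_eq_fintype_card
      omega
    have hli : LinearIndependent ℝ (fun z : ↥N.reactantSet => (z : S → ℝ)) := by
      rw [linearIndependent_iff_card_eq_finrank_span, Subtype.range_coe]
      exact hcard
    let D : (S → ℝ) →ₗ[ℝ] (S → ℝ) :=
      { toFun := fun v i => a i * v i,
        map_add' := fun u v => by funext i; simp [mul_add],
        map_smul' := fun r v => by funext i; simp [smul_eq_mul]; ring }
    have hD : LinearMap.ker D = ⊥ := by
      rw [LinearMap.ker_eq_bot]
      intro u v huv
      funext i
      exact mul_left_cancel₀ (ha i) (congrFun huv i)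
    have hli2 := hli.map' D hD
    have hfun : (fun z : ↥N.reactantSet => T (z : S → ℝ))
        = (D ∘ fun z : ↥N.reactantSet => (z : S → ℝ)) := by
      funext z
      funext i
      exact hT _ z.2 i
    rw [hfun]
    exact hli2
  · -- ACR
    intro c c' hc hc'
    set x1 : ↥N.complexes → ℝ := fun z => ∏ i, (c i) ^ (T (z : S → ℝ) i) with hx1def
    set x2 : ↥N.complexes → ℝ := fun z => ∏ i, (c' i) ^ (T (z : S → ℝ) i) with hx2def
    have hx1pos : ∀ z, 0 < x1 z := fun z =>
      Finset.prod_pos fun i _ => Real.rpow_pos_of_pos (hc.1 i) _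
    have hx2pos : ∀ z, 0 < x2 z := fun z =>
      Finset.prod_pos fun i _ => Real.rpow_pos_of_pos (hc'.1 i) _
    have hv1K : N.laplacian k x1 ∈ LinearMap.ker N.mapY ⊓ LinearMap.range N.incidence := by
      refine Submodule.mem_inf.2 ⟨?_, N.lap_mem_range k x1⟩
      rw [LinearMap.mem_ker, CRN.mapY_lap]
      exact hc.2
    have hv2K : N.laplacian k x2 ∈ LinearMap.ker N.mapY ⊓ LinearMap.range N.incidence := by
      refine Submodule.mem_inf.2 ⟨?_, N.lap_mem_range k x2⟩
      rw [LinearMap.mem_ker, CRN.mapY_lap]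
      exact hc'.2
    have hv2ne : N.laplacian k x2 ≠ 0 := by
      intro h0
      have h := N.ker_lap_nonterminal k hk x2 h0 y hy
      exact (hx2pos ⟨y, hy.1⟩).ne' h
    have hfr := N.finrank_K_le_deficiency
    rw [hδ] at hfr
    have hfr1 : Module.finrank ℝ
        ↥(LinearMap.ker N.mapY ⊓ LinearMap.range N.incidence) ≤ 1 := by
      exact_mod_cast hfr
    have hsple : Submodule.span ℝ {N.laplacian k x2}
        ≤ LinearMap.ker N.mapY ⊓ LinearMap.range N.incidence :=
      (Submodule.span_singleton_le_iff_mem _ _).2 hv2K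
    have hsp1 : Module.finrank ℝ ↥(Submodule.span ℝ {N.laplacian k x2}) = 1 :=
      finrank_span_singleton hv2ne
    have heq := Submodule.eq_of_le_of_finrank_le hsple (by rw [hsp1]; exact hfr1)
    have hv1sp : N.laplacian k x1 ∈ Submodule.span ℝ {N.laplacian k x2} := by
      rw [heq]; exact hv1K
    obtain ⟨lam, hlam⟩ := Submodule.mem_span_singleton.1 hv1sp
    have hker : N.laplacian k (x1 - lam • x2) = 0 := by
      rw [map_sub, map_smul, hlam, sub_self]
    have hEy : x1 ⟨y, hy.1⟩ = lam * x2 ⟨y, hy.1⟩ := by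
      have h := N.ker_lap_nonterminal k hk _ hker y hy
      rw [Pi.sub_apply, Pi.smul_apply, smul_eq_mul, sub_eq_zero] at h
      exact h
    have hEy' : x1 ⟨y', hy'.1⟩ = lam * x2 ⟨y', hy'.1⟩ := by
      have h := N.ker_lap_nonterminal k hk _ hker y' hy'
      rw [Pi.sub_apply, Pi.smul_apply, smul_eq_mul, sub_eq_zero] at h
      exact h
    have hlampos : 0 < lam := by
      have h1 := hx1pos ⟨y, hy.1⟩
      have h2 := hx2pos ⟨y, hy.1⟩
      nlinarith [hEy]
    have hlog : ∀ (d : S → ℝ), (∀ i, 0 < d i) → ∀ z : S → ℝ,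
        Real.log (∏ i, d i ^ (T z i)) = ∑ i, T z i * Real.log (d i) := by
      intro d hd z
      rw [Real.log_prod]
      · exact Finset.sum_congr rfl fun i _ => Real.log_rpow (hd i) _
      · intro i _
        exact (Real.rpow_pos_of_pos (hd i) _).ne'
    have hA1 : ∑ i, T y i * Real.log (c i)
        = Real.log lam + ∑ i, T y i * Real.log (c' i) := by
      have h := congrArg Real.log hEy
      rw [Real.log_mul hlampos.ne' (hx2pos _).ne'] at h
      have e1 : Real.log (x1 ⟨y, hy.1⟩) = ∑ i, T y i * Real.log (c i) := hlog c hc.1 y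
      have e2 : Real.log (x2 ⟨y, hy.1⟩) = ∑ i, T y i * Real.log (c' i) := hlog c' hc'.1 y
      rw [e1, e2] at h
      exact h
    have hA2 : ∑ i, T y' i * Real.log (c i)
        = Real.log lam + ∑ i, T y' i * Real.log (c' i) := by
      have h := congrArg Real.log hEy'
      rw [Real.log_mul hlampos.ne' (hx2pos _).ne'] at h
      have e1 : Real.log (x1 ⟨y', hy'.1⟩) = ∑ i, T y' i * Real.log (c i) := hlog c hc.1 y'
      have e2 : Real.log (x2 ⟨y', hy'.1⟩) = ∑ i, T y' i * Real.log (c' i) := hlog c' hc'.1 y'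
      rw [e1, e2] at h
      exact h
    have hsum : ∑ i, (T y i - T y' i) * (Real.log (c i) - Real.log (c' i)) = 0 := by
      have hexp : ∑ i, (T y i - T y' i) * (Real.log (c i) - Real.log (c' i))
          = (∑ i, T y i * Real.log (c i)) - (∑ i, T y' i * Real.log (c i))
            - ((∑ i, T y i * Real.log (c' i)) - (∑ i, T y' i * Real.log (c' i))) := by
        rw [← Finset.sum_sub_distrib, ← Finset.sum_sub_distrib, ← Finset.sum_sub_distrib]
        exact Finset.sum_congr rfl fun i _ => by ring
      rw [hexp]
      linarith [hA1, hA2]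
    have hyR := N.nonterminal_reactant hy
    have hy'R := N.nonterminal_reactant hy'
    have hjne : y j ≠ y' j := by
      intro h
      apply hne
      funext i
      by_cases hij : i = j
      · rw [hij]; exact h
      · exact hdiff i hij
    rw [Finset.sum_eq_single j] at hsum
    · have hTj : T y j - T y' j = a j * (y j - y' j) := by
        rw [hT y hyR j, hT y' hy'R j]; ring
      rw [hTj] at hsum
      have hne2 : a j * (y j - y' j) ≠ 0 := mul_ne_zero (ha j) (sub_ne_zero.2 hjne)
      have hlogeq : Real.log (c j) = Real.log (c' j) := by
        rcases mul_eq_zero.1 hsum with h | h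
        · exact absurd h hne2
        · linarith
      rw [← Real.exp_log (hc.1 j), ← Real.exp_log (hc'.1 j), hlogeq]
    · intro i _ hij
      rw [hT y hyR i, hT y' hy'R i, hdiff i hij]
      ring
    · intro h
      exact absurd (Finset.mem_univ j) h
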